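/- The set A = {gᵏ : k ∈ ℤ} (indexed by ℤ) with operations gᵏ + gˡ = g^{k+(-1)^k l} and gᵏ ∘ gˡ = g^{k+l} is a skew left brace whose multiplicative group is isomorphic to ℤ and whose additive group is isomorphic to the infinite dihedral group. -/

import Mathlib

/-- The "dihedral" addition `gᵏ + gˡ = g^(k+(-1)^k l)` on the exponents. -/
def dihAdd (k l : ℤ) : ℤ := k + (Int.negOnePow k : ℤ) * l

/-- The additive inverse for `dihAdd`. -/
def dihNeg (k : ℤ) : ℤ := -((Int.negOnePow k : ℤ) * k)

lemma eps_sq (k : ℤ) : (Int.negOnePow k : ℤ) * (Int.negOnePow k : ℤ) = 1 := by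
  rw [← Units.val_mul, Int.units_mul_self, Units.val_one]

lemma eps_even {k : ℤ} (h : Even k) : (Int.negOnePow k : ℤ) = 1 := by
  rw [Int.negOnePow_even k h, Units.val_one]

lemma eps_odd {k : ℤ} (h : Odd k) : (Int.negOnePow k : ℤ) = -1 := by
  rw [Int.negOnePow_odd k h, Units.val_neg, Units.val_one]

lemma eps_add (k l : ℤ) :
    ((k + l).negOnePow : ℤ) = (k.negOnePow : ℤ) * (l.negOnePow : ℤ) := by
  rw [Int.negOnePow_add, Units.val_mul]

lemma eps_dihAdd (k l : ℤ) :
    ((dihAdd k l).negOnePow : ℤ) = (k.negOnePow : ℤ) * (l.negOnePow : ℤ) := by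
  rcases Int.even_or_odd k with h | h
  · rw [dihAdd, eps_even h, one_mul, eps_add, eps_even h, one_mul]
  · rw [dihAdd, eps_odd h, neg_one_mul, ← sub_eq_add_neg, Int.negOnePow_sub, Units.val_mul,
      eps_odd h]

lemma eps_dihNeg (k : ℤ) : ((dihNeg k).negOnePow : ℤ) = (k.negOnePow : ℤ) := by
  rcases Int.even_or_odd k with h | h
  · rw [dihNeg, eps_even h, one_mul, Int.negOnePow_neg, eps_even h]
  · rw [dihNeg, eps_odd h, neg_one_mul, neg_neg, eps_odd h]

/-- forward map to the dihedral group -/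
def dihF (k : ℤ) : DihedralGroup 0 :=
  if Even k then DihedralGroup.r (-(k / 2) : ℤ) else DihedralGroup.sr ((k - 1) / 2 : ℤ)

/-- `ZMod 0` is definitionally `ℤ`. -/
def z0 (i : ZMod 0) : ℤ := i

/-- inverse map -/
def dihG : DihedralGroup 0 → ℤ
  | DihedralGroup.r i => -2 * z0 i
  | DihedralGroup.sr i => 2 * z0 i + 1

lemma dihF_even (m : ℤ) : dihF (2 * m) = DihedralGroup.r (-m : ℤ) := by
  have h : Even (2 * m) := ⟨m, two_mul m⟩
  rw [dihF, if_pos h]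
  congr 1
  show (-(2 * m / 2) : ℤ) = -m
  omega

lemma dihF_odd (m : ℤ) : dihF (2 * m + 1) = DihedralGroup.sr (m : ℤ) := by
  have h : ¬ Even (2 * m + 1) := by
    rw [Int.not_even_iff_odd]; exact ⟨m, by ring⟩
  rw [dihF, if_neg h]
  congr 1
  show ((2 * m + 1 - 1) / 2 : ℤ) = m
  omega

theorem dihedral_skewBrace_on_Z :
    (∀ k l m : ℤ, dihAdd (dihAdd k l) m = dihAdd k (dihAdd l m)) ∧
      (∀ k : ℤ, dihAdd k 0 = k ∧ dihAdd 0 k = k) ∧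
      (∀ k : ℤ, dihAdd k (dihNeg k) = 0 ∧ dihAdd (dihNeg k) k = 0) ∧
      (∀ a b c : ℤ, a + dihAdd b c = dihAdd (dihAdd (a + b) (dihNeg a)) (a + c)) ∧
      (∃ g : ℤ ≃ Multiplicative ℤ, ∀ k l : ℤ, g (k + l) = g k * g l) ∧
      (∃ f : ℤ → DihedralGroup 0,
        Function.Bijective f ∧ ∀ k l : ℤ, f (dihAdd k l) = f k * f l) := by
  refine ⟨?_, ?_, ?_, ?_, ?_, ?_⟩
  · intro k l m
    rw [show dihAdd (dihAdd k l) m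
        = dihAdd k l + ((dihAdd k l).negOnePow : ℤ) * m from rfl, eps_dihAdd]
    simp only [dihAdd]
    ring
  · intro k
    exact ⟨by simp [dihAdd], by simp [dihAdd]⟩
  · intro k
    constructor
    · rw [dihAdd, dihNeg, mul_neg, ← mul_assoc, eps_sq]
      ring
    · rw [show dihAdd (dihNeg k) k = dihNeg k + ((dihNeg k).negOnePow : ℤ) * k from rfl,
        eps_dihNeg, dihNeg]
      ring
  · intro a b c
    rw [show dihAdd (dihAdd (a + b) (dihNeg a)) (a + c)
        = dihAdd (a + b) (dihNeg a)
          + ((dihAdd (a + b) (dihNeg a)).negOnePow : ℤ) * (a + c) from rfl,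
      eps_dihAdd, eps_dihNeg]
    simp only [dihAdd, dihNeg]
    rw [eps_add]
    have hx := eps_sq a
    set x := (a.negOnePow : ℤ)
    set y := (b.negOnePow : ℤ)
    linear_combination (-(c * y)) * hx
  · exact ⟨Equiv.refl _, fun k l => rfl⟩
  · refine ⟨dihF, ?_, ?_⟩
    · rw [Function.bijective_iff_has_inverse]
      refine ⟨dihG, ?_, ?_⟩
      · intro k
        rcases Int.even_or_odd' k with ⟨m, rfl | rfl⟩
        · rw [dihF_even]
          show -2 * (-m) = 2 * m
          ring
        · rw [dihF_odd]
          show 2 * m + 1 = 2 * m + 1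
          rfl
      · intro x
        cases x with
        | r i =>
          show dihF (-2 * z0 i) = DihedralGroup.r i
          have : (-2 * z0 i) = 2 * (-(z0 i)) := by ring
          rw [this, dihF_even, neg_neg]
          rfl
        | sr i =>
          show dihF (2 * z0 i + 1) = DihedralGroup.sr i
          rw [dihF_odd]
          rfl
    · intro k l
      rcases Int.even_or_odd' k with ⟨m, rfl | rfl⟩ <;>
        rcases Int.even_or_odd' l with ⟨n, rfl | rfl⟩
      · have h1 : dihAdd (2 * m) (2 * n) = 2 * (m + n) := by
          rw [dihAdd, eps_even ⟨m, two_mul m⟩]; ring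
        erw [h1, dihF_even, dihF_even, dihF_even, DihedralGroup.r_mul_r]
        congr 1
        all_goals exact (by ring : (-(m + n) : ℤ) = -m + -n)
      · have h1 : dihAdd (2 * m) (2 * n + 1) = 2 * (m + n) + 1 := by
          rw [dihAdd, eps_even ⟨m, two_mul m⟩]; ring
        erw [h1, dihF_odd, dihF_even, dihF_odd, DihedralGroup.r_mul_sr]
        congr 1
        all_goals exact (by ring : (m + n : ℤ) = n - -m)
      · have h1 : dihAdd (2 * m + 1) (2 * n) = 2 * (m - n) + 1 := by
          rw [dihAdd, eps_odd ⟨m, by ring⟩]; ring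
        erw [h1, dihF_odd, dihF_odd, dihF_even, DihedralGroup.sr_mul_r]
        congr 1
        all_goals exact (by ring : (m - n : ℤ) = m + -n)
      · have h1 : dihAdd (2 * m + 1) (2 * n + 1) = 2 * (m - n) := by
          rw [dihAdd, eps_odd ⟨m, by ring⟩]; ring
        erw [h1, dihF_even, dihF_odd, dihF_odd, DihedralGroup.sr_mul_sr]
        congr 1
        all_goals exact (by ring : (-(m - n) : ℤ) = n - m)
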